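/- Let (V,E) and (W,F) be Bratteli diagrams with embeddings ξ, ξ⁰, ξ¹ as specified. Fix n₀ ≥ 1 and l > n₀, and for i = 0,1 set Y^i_l = {x ∈ X_E : x_j ∈ ξ^i(F_j) for all j with n₀ < j ≤ l}. If μ is an R_E-invariant Borel probability measure on X_E, then μ(U(q) ∩ Y^i_l) ≤ 2^{n₀−l}·μ(U(q)) for every q ∈ E_{0,n₀} and i = 0,1; consequently μ(Y⁰_l) + μ(Y¹_l) ≤ 2^{1+n₀−l}. -/

import Mathlib

open MeasureTheory

structure Bratteli where
  V : ℕ → Type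
  E : ℕ → Type
  src : (n : ℕ) → E n → V n
  tgt : (n : ℕ) → E n → V (n + 1)
  V_finite : ∀ n, Finite (V n)
  V_nonempty : ∀ n, Nonempty (V n)
  V0_subsingleton : Subsingleton (V 0)
  E_finite : ∀ n, Finite (E n)
  E_nonempty : ∀ n, Nonempty (E n)

namespace Bratteli

variable (D : Bratteli)

instance (n : ℕ) : Finite (D.E n) := D.E_finite n
instance (n : ℕ) : Finite (D.V n) := D.V_finite n
instance (n : ℕ) : TopologicalSpace (D.E n) := ⊥
instance (n : ℕ) : DiscreteTopology (D.E n) := ⟨rfl⟩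

/-- The infinite path space `X_E`.  Coordinate `k` corresponds to the edge `x_{k+1}`
of the paper, lying in the edge set `E_{k+1}` (between vertex levels `k` and `k+1`). -/
def X : Type := { x : (n : ℕ) → D.E n // ∀ n, D.tgt n (x n) = D.src (n + 1) (x (n + 1)) }

instance : TopologicalSpace D.X :=
  inferInstanceAs (TopologicalSpace
    { x : (n : ℕ) → D.E n // ∀ n, D.tgt n (x n) = D.src (n + 1) (x (n + 1)) })

/-- `p` (a full choice of one edge at every level) is a finite path of length `n`
when restricted to its first `n` coordinates, i.e. coordinates `0,…,n-1` are
composable.  A path of length `n` represents an element of `E_{0,n}` of the paper. -/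
def IsPath (n : ℕ) (p : (k : ℕ) → D.E k) : Prop :=
  ∀ k, k + 1 < n → D.tgt k (p k) = D.src (k + 1) (p (k + 1))

/-- The cylinder set `U(p)` determined by the first `n` coordinates of `p`. -/
def cyl (n : ℕ) (p : (k : ℕ) → D.E k) : Set D.X :=
  { x | ∀ k, k < n → x.1 k = p k }

/-- The set `β_{p,q}` for `p, q ∈ E_{0,n}`. -/
def beta (n : ℕ) (p q : (k : ℕ) → D.E k) : Set (D.X × D.X) :=
  { z | (∀ k, k < n → z.1.1 k = p k ∧ z.2.1 k = q k) ∧ ∀ k, n ≤ k → z.1.1 k = z.2.1 k }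

/-- Tail equivalence `R_E`. -/
def RE : Set (D.X × D.X) :=
  ⋃ (n : ℕ) (p : (k : ℕ) → D.E k) (q : (k : ℕ) → D.E k)
    (_ : D.IsPath (n + 1) p) (_ : D.IsPath (n + 1) q)
    (_ : D.tgt n (p n) = D.tgt n (q n)), D.beta (n + 1) p q

instance : MeasurableSpace D.X := borel D.X

/-- A (Borel) measure `μ` is invariant for a relation `S ⊆ X × X` if for every
Borel subset `U ⊆ S` on which both coordinate projections are injective, the
images of `U` under the two projections have the same measure. -/
def Invariant (μ : Measure D.X) (S : Set (D.X × D.X)) : Prop :=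
  ∀ U : Set (D.X × D.X), U ⊆ S → MeasurableSet U →
    Set.InjOn Prod.fst U → Set.InjOn Prod.snd U →
    μ (Prod.fst '' U) = μ (Prod.snd '' U)

end Bratteli

/-- The inverse of a relation. -/
def relInv {α : Type*} (S : Set (α × α)) : Set (α × α) := { z | (z.2, z.1) ∈ S }

/-- Composition of relations: `S ∘ T = {(x,y) : ∃ z, (x,z) ∈ S, (z,y) ∈ T}`. -/
def relComp {α : Type*} (S T : Set (α × α)) : Set (α × α) :=
  { z | ∃ w, (z.1, w) ∈ S ∧ (w, z.2) ∈ T }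

/-- A pair of disjoint embeddings `ξ⁰, ξ¹` of a Bratteli diagram `(W,F)` (here `B`)
into a Bratteli diagram `(V,E)` (here `D`), over a common vertex embedding `ξ`. -/
structure BratteliEmb (B D : Bratteli) where
  xiV : (n : ℕ) → B.V n → D.V n
  xi0 : (n : ℕ) → B.E n → D.E n
  xi1 : (n : ℕ) → B.E n → D.E n
  xiV_inj : ∀ n, Function.Injective (xiV n)
  xi0_inj : ∀ n, Function.Injective (xi0 n)
  xi1_inj : ∀ n, Function.Injective (xi1 n)
  src_xi0 : ∀ n (f : B.E n), D.src n (xi0 n f) = xiV n (B.src n f)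
  tgt_xi0 : ∀ n (f : B.E n), D.tgt n (xi0 n f) = xiV (n + 1) (B.tgt n f)
  src_xi1 : ∀ n (f : B.E n), D.src n (xi1 n f) = xiV n (B.src n f)
  tgt_xi1 : ∀ n (f : B.E n), D.tgt n (xi1 n f) = xiV (n + 1) (B.tgt n f)
  disjoint01 : ∀ n (f g : B.E n), xi0 n f ≠ xi1 n g

namespace BratteliEmb

variable {B D : Bratteli} (E : BratteliEmb B D)

/-- The set `λ^{1,0}_{p,q}` for `(p,q) ∈ I_n^W` (paths of length `n+1`): pairs whose first
`n+1` coordinates are `p` resp. `q`, and whose remaining coordinates run through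
`ξ¹(f_k)` resp. `ξ⁰(f_k)` for a common infinite path `(f_k)` of `(W,F)`. -/
def lam (n : ℕ) (p q : (k : ℕ) → D.E k) : Set (D.X × D.X) :=
  { z | (∀ k, k < n + 1 → z.1.1 k = p k ∧ z.2.1 k = q k) ∧
        ∀ k, n + 1 ≤ k → ∃ f : B.E k, z.1.1 k = E.xi1 k f ∧ z.2.1 k = E.xi0 k f }

/-- The set `δ^{1,0}_{p,q}` for `(p,q) ∈ I_n^W`: the union of `λ^{1,0}_{p,q}` with the pairs
which, after a finite common block of `(ξ¹,ξ⁰)`-matched edges, either swap to a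
`(ξ⁰,ξ¹)`-matched edge and then agree, or meet a common edge outside
`ξ⁰(F) ∪ ξ¹(F)` and then agree. -/
def delta (n : ℕ) (p q : (k : ℕ) → D.E k) : Set (D.X × D.X) :=
  E.lam n p q ∪
  { z | (∀ k, k < n + 1 → z.1.1 k = p k ∧ z.2.1 k = q k) ∧
        ∃ m : ℕ,
          (∀ k, n + 1 ≤ k → k ≤ n + 1 + m →
            ∃ f : B.E k, z.1.1 k = E.xi1 k f ∧ z.2.1 k = E.xi0 k f) ∧
          (∃ f : B.E (n + m + 2), z.1.1 (n + m + 2) = E.xi0 (n + m + 2) f ∧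
            z.2.1 (n + m + 2) = E.xi1 (n + m + 2) f) ∧
          (∀ k, n + m + 2 < k → z.1.1 k = z.2.1 k) } ∪
  { z | (∀ k, k < n + 1 → z.1.1 k = p k ∧ z.2.1 k = q k) ∧
        ∃ m : ℕ,
          (∀ k, n + 1 ≤ k → k ≤ n + 1 + m →
            ∃ f : B.E k, z.1.1 k = E.xi1 k f ∧ z.2.1 k = E.xi0 k f) ∧
          (∀ f : B.E (n + m + 2), z.1.1 (n + m + 2) ≠ E.xi0 (n + m + 2) f ∧
            z.1.1 (n + m + 2) ≠ E.xi1 (n + m + 2) f) ∧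
          (∀ k, n + m + 2 ≤ k → z.1.1 k = z.2.1 k) }

/-- The equivalence relation `R`, generated by `R_E` together with all
`δ^{1,0}_{p,q}` and `δ^{0,1}_{q,p}` for `(p,q) ∈ I_n^W`, `n ≥ 1`. -/
def Rfull : Set (D.X × D.X) :=
  D.RE ∪
  ⋃ (n : ℕ) (p : (k : ℕ) → D.E k) (q : (k : ℕ) → D.E k)
    (_ : D.IsPath (n + 1) p) (_ : D.IsPath (n + 1) q)
    (_ : D.tgt n (p n) = D.tgt n (q n))
    (_ : ∃ w : B.V (n + 1), D.tgt n (p n) = E.xiV (n + 1) w),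
    (E.delta n p q ∪ relInv (E.delta n p q))

/-- The compact open subrelation `R_n` (`n+1` in the indexing of the paper). -/
def Rn (n : ℕ) : Set (D.X × D.X) :=
  (⋃ (p : (k : ℕ) → D.E k) (q : (k : ℕ) → D.E k)
    (_ : D.IsPath (n + 1) p) (_ : D.IsPath (n + 1) q)
    (_ : D.tgt n (p n) = D.tgt n (q n)), D.beta (n + 1) p q) ∪
  ⋃ (p : (k : ℕ) → D.E k) (q : (k : ℕ) → D.E k)
    (_ : D.IsPath (n + 1) p) (_ : D.IsPath (n + 1) q)
    (_ : D.tgt n (p n) = D.tgt n (q n))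
    (_ : ∃ w : B.V (n + 1), D.tgt n (p n) = E.xiV (n + 1) w),
    (E.delta n p q ∪ relInv (E.delta n p q))

end BratteliEmb

namespace BratteliEmb

variable {B D : Bratteli} (E : BratteliEmb B D)

/-- `Y⁰_l = {x ∈ X_E : x_j ∈ ξ⁰(F_j) for all n₀ < j ≤ l}` (coordinates `n₀+1,…,l`). -/
def Y0 (n0 l : ℕ) : Set D.X :=
  { x | ∀ k, n0 + 1 ≤ k → k ≤ l → ∃ f : B.E k, x.1 k = E.xi0 k f }

/-- `Y¹_l = {x ∈ X_E : x_j ∈ ξ¹(F_j) for all n₀ < j ≤ l}` (coordinates `n₀+1,…,l`). -/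
def Y1 (n0 l : ℕ) : Set D.X :=
  { x | ∀ k, n0 + 1 ≤ k → k ≤ l → ∃ f : B.E k, x.1 k = E.xi1 k f }

end BratteliEmb

section Aux

open Set MeasureTheory

namespace Bratteli

variable (D : Bratteli)

instance : T2Space D.X :=
  inferInstanceAs (T2Space
    { x : (n : ℕ) → D.E n // ∀ n, D.tgt n (x n) = D.src (n + 1) (x (n + 1)) })

instance : SecondCountableTopology D.X := by
  have h : SecondCountableTopology
      { x : (n : ℕ) → D.E n // ∀ n, D.tgt n (x n) = D.src (n + 1) (x (n + 1)) } :=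
    Topology.IsEmbedding.subtypeVal.secondCountableTopology
  exact h

instance : BorelSpace D.X := ⟨rfl⟩

variable {D}

lemma continuous_eval (k : ℕ) : Continuous fun x : D.X => x.1 k :=
  (continuous_apply k).comp continuous_subtype_val

lemma isOpen_coord (k : ℕ) (s : Set (D.E k)) : IsOpen {x : D.X | x.1 k ∈ s} :=
  (isOpen_discrete s).preimage (continuous_eval k)

lemma measurableSet_coord (k : ℕ) (s : Set (D.E k)) : MeasurableSet {x : D.X | x.1 k ∈ s} :=
  (isOpen_coord k s).measurableSet

lemma measurableSet_cyl (n : ℕ) (q : (k : ℕ) → D.E k) : MeasurableSet (D.cyl n q) := by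
  have h : D.cyl n q = ⋂ k : ℕ, {x : D.X | k < n → x.1 k = q k} := by
    ext x; simp [Bratteli.cyl, Set.mem_iInter]
  rw [h]
  refine MeasurableSet.iInter fun k => ?_
  by_cases hk : k < n
  · have h2 : {x : D.X | k < n → x.1 k = q k} = {x : D.X | x.1 k ∈ ({q k} : Set (D.E k))} := by
      ext x; simp [hk]
    rw [h2]; exact measurableSet_coord k _
  · have h2 : {x : D.X | k < n → x.1 k = q k} = Set.univ := by
      ext x; simp [hk]
    rw [h2]; exact MeasurableSet.univ

end Bratteli

namespace BratteliEmb

variable {B D : Bratteli} (E : BratteliEmb B D)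

open Classical in
/-- Exchange `ξ⁰(f) ↔ ξ¹(f)`; other edges are fixed. -/
noncomputable def flipEdge (k : ℕ) (e : D.E k) : D.E k :=
  if h : ∃ f, e = E.xi0 k f then E.xi1 k h.choose
  else if h2 : ∃ f, e = E.xi1 k f then E.xi0 k h2.choose
  else e

lemma flipEdge_xi0 (k : ℕ) (f : B.E k) : E.flipEdge k (E.xi0 k f) = E.xi1 k f := by
  unfold flipEdge
  split_ifs with h1 h2
  · exact congrArg _ (E.xi0_inj k h1.choose_spec.symm)
  · exact absurd ⟨f, rfl⟩ h1
  · exact absurd ⟨f, rfl⟩ h1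

lemma flipEdge_xi1 (k : ℕ) (f : B.E k) : E.flipEdge k (E.xi1 k f) = E.xi0 k f := by
  unfold flipEdge
  split_ifs with h1 h2
  · obtain ⟨g, hg⟩ := h1
    exact absurd hg.symm (E.disjoint01 k g f)
  · exact congrArg _ (E.xi1_inj k h2.choose_spec.symm)
  · exact absurd ⟨f, rfl⟩ h2

lemma flipEdge_other (k : ℕ) (e : D.E k) (h1 : ¬∃ f, e = E.xi0 k f)
    (h2 : ¬∃ f, e = E.xi1 k f) : E.flipEdge k e = e := by
  unfold flipEdge
  rw [dif_neg h1, dif_neg h2]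

lemma tgt_flipEdge (k : ℕ) (e : D.E k) : D.tgt k (E.flipEdge k e) = D.tgt k e := by
  by_cases h1 : ∃ f, e = E.xi0 k f
  · obtain ⟨f, rfl⟩ := h1
    rw [E.flipEdge_xi0, E.tgt_xi1, E.tgt_xi0]
  · by_cases h2 : ∃ f, e = E.xi1 k f
    · obtain ⟨f, rfl⟩ := h2
      rw [E.flipEdge_xi1, E.tgt_xi0, E.tgt_xi1]
    · rw [E.flipEdge_other k e h1 h2]

lemma src_flipEdge (k : ℕ) (e : D.E k) : D.src k (E.flipEdge k e) = D.src k e := by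
  by_cases h1 : ∃ f, e = E.xi0 k f
  · obtain ⟨f, rfl⟩ := h1
    rw [E.flipEdge_xi0, E.src_xi1, E.src_xi0]
  · by_cases h2 : ∃ f, e = E.xi1 k f
    · obtain ⟨f, rfl⟩ := h2
      rw [E.flipEdge_xi1, E.src_xi0, E.src_xi1]
    · rw [E.flipEdge_other k e h1 h2]

lemma flipEdge_invol (k : ℕ) : Function.Involutive (E.flipEdge k) := by
  intro e
  by_cases h1 : ∃ f, e = E.xi0 k f
  · obtain ⟨f, rfl⟩ := h1
    rw [E.flipEdge_xi0, E.flipEdge_xi1]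
  · by_cases h2 : ∃ f, e = E.xi1 k f
    · obtain ⟨f, rfl⟩ := h2
      rw [E.flipEdge_xi1, E.flipEdge_xi0]
    · rw [E.flipEdge_other k e h1 h2, E.flipEdge_other k e h1 h2]

/-- Flip the coordinates of `x` lying in the finite set `S`. -/
noncomputable def flipX (S : Finset ℕ) (x : D.X) : D.X :=
  ⟨fun k => if k ∈ S then E.flipEdge k (x.1 k) else x.1 k, by
    intro n
    have h1 : ∀ (k : ℕ) (e : D.E k),
        D.tgt k (if k ∈ S then E.flipEdge k e else e) = D.tgt k e := by
      intro k e; split_ifs with h; exacts [E.tgt_flipEdge k e, rfl]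
    have h2 : ∀ (k : ℕ) (e : D.E k),
        D.src k (if k ∈ S then E.flipEdge k e else e) = D.src k e := by
      intro k e; split_ifs with h; exacts [E.src_flipEdge k e, rfl]
    rw [h1, h2]; exact x.2 n⟩

lemma flipX_coord_mem (S : Finset ℕ) (x : D.X) {k : ℕ} (h : k ∈ S) :
    (E.flipX S x).1 k = E.flipEdge k (x.1 k) := if_pos h

lemma flipX_coord_not_mem (S : Finset ℕ) (x : D.X) {k : ℕ} (h : k ∉ S) :
    (E.flipX S x).1 k = x.1 k := if_neg h

lemma tgt_flipX (S : Finset ℕ) (x : D.X) (k : ℕ) :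
    D.tgt k ((E.flipX S x).1 k) = D.tgt k (x.1 k) := by
  by_cases h : k ∈ S
  · rw [E.flipX_coord_mem S x h, E.tgt_flipEdge]
  · rw [E.flipX_coord_not_mem S x h]

lemma flipX_invol (S : Finset ℕ) : Function.Involutive (E.flipX S) := by
  intro x
  apply Subtype.ext
  funext k
  show (if k ∈ S then E.flipEdge k ((E.flipX S x).1 k) else (E.flipX S x).1 k) = x.1 k
  by_cases h : k ∈ S
  · rw [if_pos h, E.flipX_coord_mem S x h, E.flipEdge_invol k]
  · rw [if_neg h, E.flipX_coord_not_mem S x h]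

lemma continuous_flipX (S : Finset ℕ) : Continuous (E.flipX S) := by
  apply Continuous.subtype_mk
  apply continuous_pi
  intro k
  exact (continuous_of_discreteTopology
    (f := fun e : D.E k => if k ∈ S then E.flipEdge k e else e)).comp
    (Bratteli.continuous_eval k)

/-- Flipping coordinates below `l` preserves any `R_E`-invariant measure. -/
lemma flip_measure {μ : Measure D.X} (hinv : D.Invariant μ D.RE) (l : ℕ) (S : Finset ℕ)
    (hS : ∀ k ∈ S, k ≤ l) {A : Set D.X} (hA : MeasurableSet A) :
    μ (E.flipX S ⁻¹' A) = μ A := by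
  set T := E.flipX S with hT
  have hTc : Continuous T := E.continuous_flipX S
  have hTi : Function.Involutive T := E.flipX_invol S
  set U : Set (D.X × D.X) := {z | z.1 ∈ T ⁻¹' A ∧ z.2 = T z.1} with hU
  have hsub : U ⊆ D.RE := by
    intro z hz
    obtain ⟨-, hz2⟩ := hz
    simp only [Bratteli.RE, Set.mem_iUnion]
    refine ⟨l, z.1.1, (T z.1).1, fun k _ => z.1.2 k, fun k _ => (T z.1).2 k,
      (E.tgt_flipX S z.1 l).symm, fun k _ => ⟨rfl, by rw [hz2]⟩, fun k hk => ?_⟩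
    rw [hz2]
    exact (E.flipX_coord_not_mem S z.1 (fun hm => absurd (hS k hm) (by omega))).symm
  have hUm : MeasurableSet U := by
    have h1 : MeasurableSet {z : D.X × D.X | z.1 ∈ T ⁻¹' A} :=
      measurable_fst (hTc.measurable hA)
    have h2 : IsClosed {z : D.X × D.X | z.2 = T z.1} :=
      isClosed_eq continuous_snd (hTc.comp continuous_fst)
    exact h1.inter h2.measurableSet
  have hfst : Prod.fst '' U = T ⁻¹' A := by
    ext x
    constructor
    · rintro ⟨⟨a, b⟩, ⟨ha, -⟩, rfl⟩
      exact ha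
    · intro hx
      exact ⟨(x, T x), ⟨hx, rfl⟩, rfl⟩
  have hsnd : Prod.snd '' U = A := by
    ext y
    constructor
    · rintro ⟨⟨a, b⟩, ⟨ha, hb⟩, rfl⟩
      simp only at hb
      rw [hb]
      exact ha
    · intro hy
      exact ⟨(T y, y), ⟨by simpa [Set.mem_preimage, hTi y] using hy, (hTi y).symm⟩, rfl⟩
  have hinj1 : Set.InjOn Prod.fst U := by
    rintro ⟨a, b⟩ ⟨ha, hb⟩ ⟨c, d⟩ ⟨hc, hd⟩ h
    simp only at h hb hd
    simp only [Prod.mk.injEq]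
    exact ⟨h, by rw [hb, hd, h]⟩
  have hinj2 : Set.InjOn Prod.snd U := by
    rintro ⟨a, b⟩ ⟨ha, hb⟩ ⟨c, d⟩ ⟨hc, hd⟩ h
    simp only at h hb hd
    have h1 : T b = a := by rw [hb, hTi]
    have h2 : T d = c := by rw [hd, hTi]
    simp only [Prod.mk.injEq]
    exact ⟨by rw [← h1, ← h2, h], h⟩
  have hkey := hinv U hsub hUm hinj1 hinj2
  rw [hfst, hsnd] at hkey
  exact hkey

/-- The key estimate, uniformly for `(a, b) = (ξ⁰, ξ¹)` or `(ξ¹, ξ⁰)`. -/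
lemma key {μ : Measure D.X} [IsProbabilityMeasure μ] (hinv : D.Invariant μ D.RE)
    (n0 l : ℕ) (hl : n0 < l)
    (a b : (k : ℕ) → B.E k → D.E k)
    (hab : ∀ k f, E.flipEdge k (a k f) = b k f)
    (hdisj : ∀ k (f g : B.E k), a k f ≠ b k g)
    (q : (k : ℕ) → D.E k) :
    μ (D.cyl (n0 + 1) q ∩ {x : D.X | ∀ k, n0 + 1 ≤ k → k ≤ l → ∃ f : B.E k, x.1 k = a k f})
      ≤ (2 : ENNReal) ^ ((n0 : ℤ) - l) * μ (D.cyl (n0 + 1) q) := by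
  classical
  set Ya : Set D.X := {x : D.X | ∀ k, n0 + 1 ≤ k → k ≤ l → ∃ f : B.E k, x.1 k = a k f}
    with hYa
  have hYam : MeasurableSet Ya := by
    have heq : Ya = ⋂ k : ℕ,
        {x : D.X | n0 + 1 ≤ k → k ≤ l → x.1 k ∈ {e : D.E k | ∃ f, e = a k f}} := by
      ext x
      simp only [hYa, Set.mem_setOf_eq, Set.mem_iInter]
    rw [heq]
    refine MeasurableSet.iInter fun k => ?_
    by_cases h1 : n0 + 1 ≤ k ∧ k ≤ l
    · have h2 : {x : D.X | n0 + 1 ≤ k → k ≤ l → x.1 k ∈ {e : D.E k | ∃ f, e = a k f}}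
          = {x : D.X | x.1 k ∈ {e : D.E k | ∃ f, e = a k f}} := by
        ext x; simp [h1.1, h1.2]
      rw [h2]; exact Bratteli.measurableSet_coord k _
    · have h2 : {x : D.X | n0 + 1 ≤ k → k ≤ l → x.1 k ∈ {e : D.E k | ∃ f, e = a k f}}
          = Set.univ := by
        push_neg at h1
        ext x
        simp only [Set.mem_setOf_eq, Set.mem_univ, iff_true]
        intro hk hk'
        exact absurd hk' (not_le.mpr (h1 hk))
      rw [h2]; exact MeasurableSet.univ
  set A : Set D.X := D.cyl (n0 + 1) q ∩ Ya with hAdef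
  have hA : MeasurableSet A := (Bratteli.measurableSet_cyl _ _).inter hYam
  set I : Finset ℕ := Finset.Icc (n0 + 1) l with hI
  set Z : Finset ℕ → Set D.X := fun S => E.flipX S ⁻¹' A with hZ
  have hZmeas : ∀ S, MeasurableSet (Z S) := fun S => (E.continuous_flipX S).measurable hA
  have hZμ : ∀ S ∈ I.powerset, μ (Z S) = μ A := by
    intro S hSp
    refine E.flip_measure hinv l S (fun k hk => ?_) hA
    exact (Finset.mem_Icc.1 (Finset.mem_powerset.1 hSp hk)).2
  have hZcyl : ∀ S ∈ I.powerset, Z S ⊆ D.cyl (n0 + 1) q := by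
    intro S hSp x hx k hk
    have hknot : k ∉ S := by
      intro hm
      have := Finset.mem_Icc.1 (Finset.mem_powerset.1 hSp hm)
      omega
    have h := hx.1 k hk
    rwa [E.flipX_coord_not_mem S x hknot] at h
  have hchar : ∀ S ∈ I.powerset, ∀ x ∈ Z S, ∀ k, n0 + 1 ≤ k → k ≤ l →
      (if k ∈ S then ∃ f, x.1 k = b k f else ∃ f, x.1 k = a k f) := by
    intro S hSp x hx k hk1 hk2
    obtain ⟨f, hf⟩ := hx.2 k hk1 hk2
    by_cases hm : k ∈ S
    · rw [if_pos hm]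
      rw [E.flipX_coord_mem S x hm] at hf
      refine ⟨f, ?_⟩
      have h := congrArg (E.flipEdge k) hf
      rwa [E.flipEdge_invol k (x.1 k), hab] at h
    · rw [if_neg hm]
      exact ⟨f, by rwa [E.flipX_coord_not_mem S x hm] at hf⟩
  have hdisjZ : (↑I.powerset : Set (Finset ℕ)).PairwiseDisjoint Z := by
    intro S hSp S' hSp' hne
    rw [Function.onFun, Set.disjoint_left]
    intro x hxS hxS'
    have hsymm : ∃ k, (k ∈ S ∧ k ∉ S') ∨ (k ∈ S' ∧ k ∉ S) := by
      by_contra hcon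
      push_neg at hcon
      exact hne (Finset.ext fun k => ⟨(hcon k).1, (hcon k).2⟩)
    obtain ⟨k, hk⟩ := hsymm
    rcases hk with ⟨hk1, hk2⟩ | ⟨hk1, hk2⟩
    · have hkI := Finset.mem_Icc.1 (Finset.mem_powerset.1 hSp hk1)
      have c1 := hchar S hSp x hxS k hkI.1 hkI.2
      have c2 := hchar S' hSp' x hxS' k hkI.1 hkI.2
      rw [if_pos hk1] at c1
      rw [if_neg hk2] at c2
      obtain ⟨f, hf⟩ := c1
      obtain ⟨g, hg⟩ := c2
      exact hdisj k g f (hg.symm.trans hf)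
    · have hkI := Finset.mem_Icc.1 (Finset.mem_powerset.1 hSp' hk1)
      have c1 := hchar S' hSp' x hxS' k hkI.1 hkI.2
      have c2 := hchar S hSp x hxS k hkI.1 hkI.2
      rw [if_pos hk1] at c1
      rw [if_neg hk2] at c2
      obtain ⟨f, hf⟩ := c1
      obtain ⟨g, hg⟩ := c2
      exact hdisj k g f (hg.symm.trans hf)
  have hsum : ∑ S ∈ I.powerset, μ (Z S) = μ (⋃ S ∈ I.powerset, Z S) :=
    (measure_biUnion_finset hdisjZ (fun S _ => hZmeas S)).symm
  have hUb : μ (⋃ S ∈ I.powerset, Z S) ≤ μ (D.cyl (n0 + 1) q) :=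
    measure_mono (Set.iUnion₂_subset hZcyl)
  have hcount : I.powerset.card = 2 ^ (l - n0) := by
    rw [Finset.card_powerset, Nat.card_Icc]
    congr 1
    omega
  have hsum2 : ∑ S ∈ I.powerset, μ (Z S) = (2 : ENNReal) ^ (l - n0) * μ A := by
    rw [Finset.sum_congr rfl hZμ, Finset.sum_const, hcount, nsmul_eq_mul, Nat.cast_pow,
      Nat.cast_ofNat]
  have hmain : (2 : ENNReal) ^ (l - n0) * μ A ≤ μ (D.cyl (n0 + 1) q) := by
    rw [← hsum2, hsum]; exact hUb
  have h2 : (2 : ENNReal) ^ ((n0 : ℤ) - l) = ((2 : ENNReal) ^ (l - n0))⁻¹ := by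
    have hz : (n0 : ℤ) - l = -((l - n0 : ℕ) : ℤ) := by omega
    rw [hz, ENNReal.zpow_neg (2 : ENNReal), zpow_natCast]
  calc μ A = ((2 : ENNReal) ^ (l - n0))⁻¹ * ((2 : ENNReal) ^ (l - n0) * μ A) := by
        rw [← mul_assoc, ENNReal.inv_mul_cancel (pow_ne_zero _ two_ne_zero)
          (ENNReal.pow_ne_top ENNReal.ofNat_ne_top), one_mul]
    _ ≤ ((2 : ENNReal) ^ (l - n0))⁻¹ * μ (D.cyl (n0 + 1) q) := mul_le_mul_right hmain _
    _ = (2 : ENNReal) ^ ((n0 : ℤ) - l) * μ (D.cyl (n0 + 1) q) := by rw [h2]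

end BratteliEmb

end Aux

open MeasureTheory in
/-- For `l > n₀` and `μ` an `R_E`-invariant Borel probability measure:
`μ(U(q) ∩ Y^i_l) ≤ 2^{n₀−l}·μ(U(q))` for every `q ∈ E_{0,n₀}` and `i = 0,1`, and
consequently `μ(Y⁰_l) + μ(Y¹_l) ≤ 2^{1+n₀−l}`. -/
theorem stmt18 (B D : Bratteli) (E : BratteliEmb B D) (n0 l : ℕ) (hl : n0 < l)
    (μ : Measure D.X) [IsProbabilityMeasure μ] (hinv : D.Invariant μ D.RE) :
    (∀ q : (k : ℕ) → D.E k, D.IsPath (n0 + 1) q →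
      μ (D.cyl (n0 + 1) q ∩ E.Y0 n0 l) ≤ (2 : ENNReal) ^ ((n0 : ℤ) - l) * μ (D.cyl (n0 + 1) q) ∧
      μ (D.cyl (n0 + 1) q ∩ E.Y1 n0 l) ≤ (2 : ENNReal) ^ ((n0 : ℤ) - l) * μ (D.cyl (n0 + 1) q)) ∧
    μ (E.Y0 n0 l) + μ (E.Y1 n0 l) ≤ (2 : ENNReal) ^ (1 + (n0 : ℤ) - l) := by
  classical
  set c : ENNReal := (2 : ENNReal) ^ ((n0 : ℤ) - l) with hc
  have k0 : ∀ q : (k : ℕ) → D.E k,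
      μ (D.cyl (n0 + 1) q ∩ E.Y0 n0 l) ≤ c * μ (D.cyl (n0 + 1) q) := fun q =>
    E.key hinv n0 l hl E.xi0 E.xi1 (fun k f => E.flipEdge_xi0 k f)
      (fun k f g => E.disjoint01 k f g) q
  have k1 : ∀ q : (k : ℕ) → D.E k,
      μ (D.cyl (n0 + 1) q ∩ E.Y1 n0 l) ≤ c * μ (D.cyl (n0 + 1) q) := fun q =>
    E.key hinv n0 l hl E.xi1 E.xi0 (fun k f => E.flipEdge_xi1 k f)
      (fun k f g h => E.disjoint01 k g f h.symm) q
  refine ⟨fun q _ => ⟨k0 q, k1 q⟩, ?_⟩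
  -- partition of the path space into cylinders of length `n0 + 1`
  set C : ((k : Fin (n0 + 1)) → D.E k) → Set D.X :=
    fun t => {x : D.X | ∀ k : Fin (n0 + 1), x.1 k = t k} with hC
  have hCmeas : ∀ t, MeasurableSet (C t) := by
    intro t
    have h : C t = ⋂ k : Fin (n0 + 1), {x : D.X | x.1 k ∈ ({t k} : Set (D.E k))} := by
      ext x; simp [hC, Set.mem_iInter]
    rw [h]
    exact MeasurableSet.iInter fun k => Bratteli.measurableSet_coord _ _
  have hCdisj : Pairwise (Function.onFun Disjoint C) := by
    intro t t' hne
    rw [Function.onFun, Set.disjoint_left]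
    intro x hx hx'
    exact hne (funext fun k => (hx k).symm.trans (hx' k))
  have hCcover : ⋃ t, C t = Set.univ := by
    ext x
    simp only [Set.mem_iUnion, Set.mem_univ, iff_true]
    exact ⟨fun k => x.1 k, fun k => rfl⟩
  have hCsum : ∑' t, μ (C t) = 1 := by
    rw [← measure_iUnion hCdisj hCmeas, hCcover, measure_univ]
  have hbound : ∀ Yset : Set D.X,
      (∀ q : (k : ℕ) → D.E k, μ (D.cyl (n0 + 1) q ∩ Yset) ≤ c * μ (D.cyl (n0 + 1) q)) →
      μ Yset ≤ c := by
    intro Yset h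
    have hY : ∀ t, μ (Yset ∩ C t) ≤ c * μ (C t) := by
      intro t
      rcases Set.eq_empty_or_nonempty (C t) with he | ⟨x, hx⟩
      · rw [he, Set.inter_empty, measure_empty]
        exact zero_le
      · have hCt : C t = D.cyl (n0 + 1) x.1 := by
          ext y
          constructor
          · intro hy k hk
            exact (hy ⟨k, hk⟩).trans (hx ⟨k, hk⟩).symm
          · intro hy k
            exact (hy k k.2).trans (hx k)
        rw [hCt, Set.inter_comm]
        exact h x.1
    calc μ Yset = μ (⋃ t, Yset ∩ C t) := by
          rw [← Set.inter_iUnion, hCcover, Set.inter_univ]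
      _ ≤ ∑' t, μ (Yset ∩ C t) := measure_iUnion_le _
      _ ≤ ∑' t, c * μ (C t) := ENNReal.tsum_le_tsum hY
      _ = c * ∑' t, μ (C t) := ENNReal.tsum_mul_left
      _ = c := by rw [hCsum, mul_one]
  have h0 : μ (E.Y0 n0 l) ≤ c := hbound _ k0
  have h1 : μ (E.Y1 n0 l) ≤ c := hbound _ k1
  have hpow : (2 : ENNReal) ^ (1 + (n0 : ℤ) - l) = c + c := by
    have hz : 1 + (n0 : ℤ) - l = 1 + ((n0 : ℤ) - l) := by ring
    rw [hz, ENNReal.zpow_add two_ne_zero ENNReal.ofNat_ne_top, zpow_one, hc, two_mul]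
  rw [hpow]
  exact add_le_add h0 h1
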